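/- For the qutrit with energies ε₁ = 0, ε₂ = ε(1+δ), ε₃ = 2ε and δ ≤ 0, the population-reversal unitary U_rev (swapping levels 1 and 3) satisfies: the minimum over all density matrices ρ with Tr[ρH] = E of the extracted energy Tr[ρH] - Tr[U_rev ρ U_rev† H] equals 2(E - ε). -/

import Mathlib

open Matrix
open scoped BigOperators ComplexOrder

noncomputable def energy {d : ℕ} (H ρ : Matrix (Fin d) (Fin d) ℂ) : ℝ :=
  (Matrix.trace (ρ * H)).re

noncomputable def ergotropy {d : ℕ} (H ρ : Matrix (Fin d) (Fin d) ℂ) : ℝ :=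
  energy H ρ - ⨅ U : Matrix.unitaryGroup (Fin d) ℂ,
    energy H ((U : Matrix (Fin d) (Fin d) ℂ) * ρ * star (U : Matrix (Fin d) (Fin d) ℂ))

noncomputable def antiErgotropy {d : ℕ} (H ρ : Matrix (Fin d) (Fin d) ℂ) : ℝ :=
  (⨆ U : Matrix.unitaryGroup (Fin d) ℂ,
    energy H ((U : Matrix (Fin d) (Fin d) ℂ) * ρ * star (U : Matrix (Fin d) (Fin d) ℂ))) - energy H ρ

noncomputable def minErg {d : ℕ} (H : Matrix (Fin d) (Fin d) ℂ) (E : ℝ) : ℝ :=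
  sInf {x : ℝ | ∃ ρ : Matrix (Fin d) (Fin d) ℂ,
    ρ.PosSemidef ∧ ρ.trace = 1 ∧ energy H ρ = E ∧ ergotropy H ρ = x}

lemma energy_diag3 (v : Fin 3 → ℝ) (ρ : Matrix (Fin 3) (Fin 3) ℂ) :
    energy (Matrix.diagonal fun i => ((v i : ℝ) : ℂ)) ρ =
      v 0 * (ρ 0 0).re + v 1 * (ρ 1 1).re + v 2 * (ρ 2 2).re := by
  simp [energy, Matrix.trace, Matrix.diag, Matrix.mul_diagonal, Fin.sum_univ_three,
    Complex.add_re, Complex.mul_re]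
  ring

lemma conj00 (ρ : Matrix (Fin 3) (Fin 3) ℂ) :
    ((!![0,0,1;0,1,0;1,0,0] : Matrix (Fin 3) (Fin 3) ℂ) * ρ *
      star (!![0,0,1;0,1,0;1,0,0] : Matrix (Fin 3) (Fin 3) ℂ)) 0 0 = ρ 2 2 := by
  simp [Matrix.mul_apply, Fin.sum_univ_three, Matrix.star_apply, Matrix.vecMul, dotProduct]

lemma conj11 (ρ : Matrix (Fin 3) (Fin 3) ℂ) :
    ((!![0,0,1;0,1,0;1,0,0] : Matrix (Fin 3) (Fin 3) ℂ) * ρ *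
      star (!![0,0,1;0,1,0;1,0,0] : Matrix (Fin 3) (Fin 3) ℂ)) 1 1 = ρ 1 1 := by
  simp [Matrix.mul_apply, Fin.sum_univ_three, Matrix.star_apply, Matrix.vecMul, dotProduct]

lemma conj22 (ρ : Matrix (Fin 3) (Fin 3) ℂ) :
    ((!![0,0,1;0,1,0;1,0,0] : Matrix (Fin 3) (Fin 3) ℂ) * ρ *
      star (!![0,0,1;0,1,0;1,0,0] : Matrix (Fin 3) (Fin 3) ℂ)) 2 2 = ρ 0 0 := by
  simp [Matrix.mul_apply, Fin.sum_univ_three, Matrix.star_apply, Matrix.vecMul, dotProduct]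

lemma diag_re_nonneg {ρ : Matrix (Fin 3) (Fin 3) ℂ} (h : ρ.PosSemidef) (i : Fin 3) :
    0 ≤ (ρ i i).re := by
  have h2 := h.2 (Finsupp.single i 1)
  simp [dotProduct, Matrix.mulVec, Pi.single_apply] at h2
  rw [Complex.nonneg_iff] at h2
  exact h2.1

theorem qutrit_reversal_worst_case (ε δ E : ℝ) (hε : 0 < ε)
    (hδ : δ ∈ Set.Icc (-1 : ℝ) 0) (hE : E ∈ Set.Icc (0 : ℝ) (2 * ε)) :
    sInf {x : ℝ | ∃ ρ : Matrix (Fin 3) (Fin 3) ℂ, ρ.PosSemidef ∧ ρ.trace = 1 ∧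
        energy (Matrix.diagonal fun i => ((![0, ε * (1 + δ), 2 * ε] i : ℝ) : ℂ)) ρ = E ∧
        x = energy (Matrix.diagonal fun i => ((![0, ε * (1 + δ), 2 * ε] i : ℝ) : ℂ)) ρ
          - energy (Matrix.diagonal fun i => ((![0, ε * (1 + δ), 2 * ε] i : ℝ) : ℂ))
              ((!![0,0,1;0,1,0;1,0,0] : Matrix (Fin 3) (Fin 3) ℂ) * ρ *
                star (!![0,0,1;0,1,0;1,0,0] : Matrix (Fin 3) (Fin 3) ℂ))}
      = 2 * (E - ε) := by
  obtain ⟨hδ1, hδ0⟩ := hδ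
  obtain ⟨hE0, hE2⟩ := hE
  have hεne : ε ≠ 0 := ne_of_gt hε
  set S := {x : ℝ | ∃ ρ : Matrix (Fin 3) (Fin 3) ℂ, ρ.PosSemidef ∧ ρ.trace = 1 ∧
        energy (Matrix.diagonal fun i => ((![0, ε * (1 + δ), 2 * ε] i : ℝ) : ℂ)) ρ = E ∧
        x = energy (Matrix.diagonal fun i => ((![0, ε * (1 + δ), 2 * ε] i : ℝ) : ℂ)) ρ
          - energy (Matrix.diagonal fun i => ((![0, ε * (1 + δ), 2 * ε] i : ℝ) : ℂ))
              ((!![0,0,1;0,1,0;1,0,0] : Matrix (Fin 3) (Fin 3) ℂ) * ρ *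
                star (!![0,0,1;0,1,0;1,0,0] : Matrix (Fin 3) (Fin 3) ℂ))} with hS
  -- lower bound
  have key : ∀ x ∈ S, 2 * (E - ε) ≤ x := by
    rintro x ⟨ρ, hpsd, htr, hen, hx⟩
    have hp0 := diag_re_nonneg hpsd 0
    have hp1 := diag_re_nonneg hpsd 1
    have hp2 := diag_re_nonneg hpsd 2
    have htr' : (ρ 0 0).re + (ρ 1 1).re + (ρ 2 2).re = 1 := by
      have := congrArg Complex.re htr
      simpa [Matrix.trace, Matrix.diag, Fin.sum_univ_three, Complex.add_re] using this
    rw [energy_diag3] at hen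
    rw [hx, energy_diag3, energy_diag3, conj00, conj11, conj22]
    simp only [Matrix.cons_val_zero, Matrix.cons_val_one, Matrix.head_cons,
      Matrix.cons_val_two, Matrix.tail_cons] at hen ⊢
    nlinarith [mul_nonneg (mul_nonneg hε.le (neg_nonneg.2 hδ0)) hp1]
  -- membership witness
  have hmem : 2 * (E - ε) ∈ S := by
    refine ⟨Matrix.diagonal fun i => ((![1 - E / (2 * ε), 0, E / (2 * ε)] i : ℝ) : ℂ), ?_, ?_, ?_, ?_⟩
    · rw [Matrix.posSemidef_diagonal_iff]
      intro i
      rw [Complex.zero_le_real]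
      fin_cases i <;> norm_num
      · rw [div_le_one (by positivity)]; linarith
      · positivity
    · simp only [Matrix.trace_diagonal, Fin.sum_univ_three, Matrix.cons_val_zero,
        Matrix.cons_val_one, Matrix.head_cons, Matrix.cons_val_two, Matrix.tail_cons]
      push_cast
      ring
    · rw [energy_diag3]
      simp only [Matrix.diagonal_apply_eq, Matrix.cons_val_zero, Matrix.cons_val_one,
        Matrix.head_cons, Matrix.cons_val_two, Matrix.tail_cons, Complex.ofReal_re]
      field_simp
      ring
    · rw [energy_diag3, energy_diag3, conj00, conj11, conj22]
      simp only [Matrix.diagonal_apply_eq, Matrix.cons_val_zero, Matrix.cons_val_one,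
        Matrix.head_cons, Matrix.cons_val_two, Matrix.tail_cons, Complex.ofReal_re]
      field_simp
      ring
  exact le_antisymm (csInf_le ⟨2 * (E - ε), key⟩ hmem) (le_csInf ⟨_, hmem⟩ key)
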